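/- arXiv:1505.01798 — 2 statements merged into one kernel-verified Lean document; each statement's English description precedes it below -/
import Mathlib

section
/- Let d ≥ 0 and let K = (p₁, …, p_{d+3}) be a multiset of d+3 points in ℝ² whose convex hull has positive area. If σ = conv{w₁, …, w_{d+3}} and σ' = conv{w'₁, …, w'_{d+3}} are two nondegenerate (d+2)-simplices in ℝ^{d+2} with π(wᵢ) = π(w'ᵢ) = pᵢ for all i, where π : ℝ^{d+2} → ℝ² is the projection onto the first two coordinates, then for every x ∈ ℝ² not lying on any affine line through two distinct points of K, vol_d(σ ∩ π⁻¹(x)) / vol_{d+2}(σ) = vol_d(σ' ∩ π⁻¹(x)) / vol_{d+2}(σ'). In other words, the simplex spline B[K] is independent of the chosen lifted simplex. -/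
open MeasureTheory Set

noncomputable section

/-- Projection `ℝ^{m+2} → ℝ²` onto the first two coordinates. -/
def proj (m : ℕ) (w : EuclideanSpace ℝ (Fin (m + 2))) : EuclideanSpace ℝ (Fin 2) :=
  WithLp.toLp 2 (fun i : Fin 2 => w (Fin.castLE (by omega) i))

/-- `proj` as a linear map. -/
def projL (m : ℕ) : EuclideanSpace ℝ (Fin (m + 2)) →ₗ[ℝ] EuclideanSpace ℝ (Fin 2) where
  toFun := proj m
  map_add' a b := by ext i; simp [proj]
  map_smul' c a := by ext i; simp [proj]

/-- A linear section of `proj`. -/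
def secL (m : ℕ) : EuclideanSpace ℝ (Fin 2) →ₗ[ℝ] EuclideanSpace ℝ (Fin (m + 2)) where
  toFun y := WithLp.toLp 2 (fun j : Fin (m + 2) => if h : (j : ℕ) < 2 then y ⟨j, h⟩ else 0)
  map_add' a b := by ext j; by_cases h : (j : ℕ) ≤ 1 <;> simp [h]
  map_smul' c a := by ext j; by_cases h : (j : ℕ) ≤ 1 <;> simp [h]

lemma projL_secL (m : ℕ) (y : EuclideanSpace ℝ (Fin 2)) : projL m (secL m y) = y := by
  ext i
  have hi : ((Fin.castLE (by omega : 2 ≤ m + 2) i : Fin (m + 2)) : ℕ) < 2 := i.isLt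
  simp [projL, secL, proj, hi]
  intro h
  omega

/-- Determinant of a block-triangular endomorphism of a product. -/
lemma det_eq_det_fst {V W : Type*} [AddCommGroup V] [Module ℝ V] [AddCommGroup W] [Module ℝ W]
    [FiniteDimensional ℝ V] [FiniteDimensional ℝ W]
    (f : V × W →ₗ[ℝ] V × W) (A : V →ₗ[ℝ] V)
    (h2 : ∀ vw : V × W, (f vw).2 = vw.2)
    (h1 : ∀ v : V, (f (v, 0)).1 = A v) :
    LinearMap.det f = LinearMap.det A := by
  classical
  let bV := Module.finBasis ℝ V
  let bW := Module.finBasis ℝ W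
  let b := bV.prod bW
  have hbl : ∀ j, b (Sum.inl j) = (bV j, (0 : W)) := by
    intro j
    refine Prod.ext ?_ ?_
    · simp [b, Module.Basis.prod_apply_inl_fst]
    · simp [b, Module.Basis.prod_apply_inl_snd]
  have hbr : ∀ j, b (Sum.inr j) = ((0 : V), bW j) := by
    intro j
    refine Prod.ext ?_ ?_
    · simp [b, Module.Basis.prod_apply_inr_fst]
    · simp [b, Module.Basis.prod_apply_inr_snd]
  have hmat : LinearMap.toMatrix b b f =
      Matrix.fromBlocks (LinearMap.toMatrix bV bV A)
        (Matrix.of fun i j => bV.repr (f ((0 : V), bW j)).1 i) 0 1 := by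
    ext i j
    rcases i with i | i <;> rcases j with j | j
    · rw [LinearMap.toMatrix_apply, hbl j]
      simp [b, Module.Basis.prod_repr_inl, h1, LinearMap.toMatrix_apply]
    · rw [LinearMap.toMatrix_apply, hbr j]
      simp [b, Module.Basis.prod_repr_inl]
    · rw [LinearMap.toMatrix_apply, hbl j]
      simp [b, Module.Basis.prod_repr_inr, h2]
    · rw [LinearMap.toMatrix_apply, hbr j]
      simp [b, Module.Basis.prod_repr_inr, h2, Matrix.one_apply, Finsupp.single_apply, eq_comm]
  have := LinearMap.det_toMatrix b f
  rw [hmat, Matrix.det_fromBlocks_zero₂₁, Matrix.det_one, mul_one,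
    LinearMap.det_toMatrix] at this
  exact this.symm

set_option maxHeartbeats 1000000 in
/-- **Independence of the simplex spline from the chosen lifted simplex.**
Let `d ≥ 0` and let `K = (p 1, …, p (d+3))` be a multiset of `d+3` points in `ℝ²` whose convex
hull has positive area.  If `σ = conv {w 1, …, w (d+3)}` and `σ' = conv {w' 1, …, w' (d+3)}` are
two nondegenerate `(d+2)`-simplices in `ℝ^{d+2}` projecting onto the knots `p i` under the
projection `π` onto the first two coordinates, then for every `x ∈ ℝ²` not lying on any affine
line through two distinct points of `K`, the value
`vol_d (σ ∩ π⁻¹ x) / vol_{d+2} σ` is the same for `σ` and `σ'`. -/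
theorem simplex_spline_well_defined (d : ℕ)
    (p : Fin (d + 3) → EuclideanSpace ℝ (Fin 2))
    (hK : 0 < volume (convexHull ℝ (Set.range p)))
    (w w' : Fin (d + 3) → EuclideanSpace ℝ (Fin (d + 2)))
    (hw : AffineIndependent ℝ w) (hw' : AffineIndependent ℝ w')
    (hp : ∀ i, proj d (w i) = p i) (hp' : ∀ i, proj d (w' i) = p i)
    (x : EuclideanSpace ℝ (Fin 2))
    (hx : ∀ i j : Fin (d + 3), p i ≠ p j →
      x ∉ (affineSpan ℝ ({p i, p j} : Set (EuclideanSpace ℝ (Fin 2))) : Set _)) :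
    (μH[(d : ℝ)] (convexHull ℝ (Set.range w) ∩ proj d ⁻¹' {x})).toReal /
        (μH[(d : ℝ) + 2] (convexHull ℝ (Set.range w))).toReal =
      (μH[(d : ℝ)] (convexHull ℝ (Set.range w') ∩ proj d ⁻¹' {x})).toReal /
        (μH[(d : ℝ) + 2] (convexHull ℝ (Set.range w'))).toReal := by
  classical
  clear hK hx
  -- the linear equivalence taking the simplex `σ` to `σ'`
  haveI : Nonempty {i : Fin (d + 3) // i ≠ 0} :=
    ⟨⟨⟨1, by omega⟩, by simp [Fin.ext_iff]⟩⟩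
  have card_eq : Fintype.card {i : Fin (d + 3) // i ≠ 0} =
      Module.finrank ℝ (EuclideanSpace ℝ (Fin (d + 2))) := by
    simp [Fintype.card_subtype_compl, finrank_euclideanSpace_fin]
  have li : LinearIndependent ℝ fun i : {i : Fin (d + 3) // i ≠ 0} => w ↑i -ᵥ w 0 :=
    (affineIndependent_iff_linearIndependent_vsub ℝ w 0).mp hw
  have li' : LinearIndependent ℝ fun i : {i : Fin (d + 3) // i ≠ 0} => w' ↑i -ᵥ w' 0 :=
    (affineIndependent_iff_linearIndependent_vsub ℝ w' 0).mp hw'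
  let b := basisOfLinearIndependentOfCardEqFinrank li card_eq
  let b' := basisOfLinearIndependentOfCardEqFinrank li' card_eq
  have hb : ∀ i, b i = w ↑i - w 0 := fun i => by
    rw [coe_basisOfLinearIndependentOfCardEqFinrank]; exact vsub_eq_sub _ _
  have hb' : ∀ i, b' i = w' ↑i - w' 0 := fun i => by
    rw [coe_basisOfLinearIndependentOfCardEqFinrank]; exact vsub_eq_sub _ _
  let L := b.equiv b' (Equiv.refl _)
  have hLb : ∀ i, L (b i) = b' i := fun i => b.equiv_apply i b' (Equiv.refl _)
  have hL : ∀ i : {i : Fin (d + 3) // i ≠ 0}, L (w ↑i - w 0) = w' ↑i - w' 0 := by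
    intro i
    rw [← hb i, ← hb' i]; exact hLb i
  -- `L` commutes with the projection
  have hprojL : ∀ v, projL d (L v) = projL d v := by
    have key : (projL d).comp (L : _ →ₗ[ℝ] _) = projL d := by
      refine b.ext fun i => ?_
      have e1 : projL d (w' ↑i) = p ↑i := hp' ↑i
      have e2 : projL d (w' 0) = p 0 := hp' 0
      have e3 : projL d (w ↑i) = p ↑i := hp ↑i
      have e4 : projL d (w 0) = p 0 := hp 0
      rw [LinearMap.comp_apply, LinearEquiv.coe_coe, hLb i, hb', hb, map_sub, map_sub,
        e1, e2, e3, e4]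
    intro v
    exact DFunLike.congr_fun key v
  -- the affine map taking `σ` to `σ'`
  let Taff : EuclideanSpace ℝ (Fin (d + 2)) →ᵃ[ℝ] EuclideanSpace ℝ (Fin (d + 2)) :=
    { toFun := fun q => w' 0 + L (q - w 0)
      linear := L
      map_vadd' := fun q v => by
        show w' 0 + L (v + q - w 0) = L v + (w' 0 + L (q - w 0))
        rw [show v + q - w 0 = v + (q - w 0) by abel, map_add]
        abel }
  have hT : ∀ i, Taff (w i) = w' i := by
    intro i
    by_cases hi : i = 0
    · subst hi
      show w' 0 + L (w 0 - w 0) = w' 0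
      simp
    · show w' 0 + L (w i - w 0) = w' i
      rw [hL ⟨i, hi⟩]; abel
  have himg : ⇑Taff '' convexHull ℝ (range w) = convexHull ℝ (range w') := by
    rw [AffineMap.image_convexHull]
    congr 1
    rw [← Set.range_comp]
    exact congrArg _ (funext hT)
  have hTproj : ∀ q, projL d (Taff q) = projL d q := by
    intro q
    have e2 : projL d (w' 0) = p 0 := hp' 0
    have e4 : projL d (w 0) = p 0 := hp 0
    show projL d (w' 0 + L (q - w 0)) = projL d q
    rw [map_add, hprojL, map_sub, e2, e4]
    abel
  have hfiber_pre : ⇑Taff ⁻¹' (proj d ⁻¹' {x}) = proj d ⁻¹' {x} := by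
    ext q
    simp only [mem_preimage, mem_singleton_iff]
    constructor
    · intro h
      have h' : projL d (Taff q) = x := h
      rw [hTproj q] at h'
      exact h'
    · intro h
      show projL d (Taff q) = x
      rw [hTproj q]
      exact h
  have hS' : convexHull ℝ (range w') ∩ proj d ⁻¹' {x} =
      ⇑Taff '' (convexHull ℝ (range w) ∩ proj d ⁻¹' {x}) := by
    conv_rhs => rw [← hfiber_pre, Set.image_inter_preimage, himg]
  -- scaling of the denominator
  let Lm : EuclideanSpace ℝ (Fin (d + 2)) →ₗ[ℝ] EuclideanSpace ℝ (Fin (d + 2)) := L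
  haveI hHaarE : Measure.IsAddHaarMeasure
      (μH[(d : ℝ) + 2] : Measure (EuclideanSpace ℝ (Fin (d + 2)))) := by
    have h : ((d : ℝ) + 2) =
        ((Module.finrank ℝ (EuclideanSpace ℝ (Fin (d + 2))) : ℕ) : ℝ) := by
      rw [finrank_euclideanSpace_fin]; push_cast; ring
    rw [h]; infer_instance
  have hTaff_decomp : ∀ s : Set (EuclideanSpace ℝ (Fin (d + 2))),
      ⇑Taff '' s = (fun y => (w' 0 - L (w 0)) + y) '' (⇑Lm '' s) := by
    intro s
    rw [Set.image_image]
    apply Set.image_congr'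
    intro q
    show w' 0 + L (q - w 0) = w' 0 - L (w 0) + Lm q
    show w' 0 + L (q - w 0) = w' 0 - L (w 0) + L q
    rw [map_sub]; abel
  have hden : μH[(d : ℝ) + 2] (convexHull ℝ (range w')) =
      ENNReal.ofReal |LinearMap.det Lm| *
        μH[(d : ℝ) + 2] (convexHull ℝ (range w)) := by
    rw [← himg, hTaff_decomp, Set.image_add_left, measure_preimage_add,
      Measure.addHaar_image_linearMap]
  -- the kernel of the projection
  set V : Submodule ℝ (EuclideanSpace ℝ (Fin (d + 2))) := LinearMap.ker (projL d) with hV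
  have hLV : ∀ v ∈ V, Lm v ∈ V := by
    intro v hv
    have : projL d (L v) = 0 := by
      rw [hprojL]; exact hv
    exact this
  have hsurj : Function.Surjective (projL d) := fun y => ⟨secL d y, projL_secL d y⟩
  have hnV : Module.finrank ℝ V = d := by
    have h1 := LinearMap.finrank_range_add_finrank_ker (projL d)
    rw [LinearMap.range_eq_top.mpr hsurj, finrank_top, ← hV] at h1
    have h2 : Module.finrank ℝ (EuclideanSpace ℝ (Fin (d + 2))) = d + 2 :=
      finrank_euclideanSpace_fin
    have h3 : Module.finrank ℝ (EuclideanSpace ℝ (Fin 2)) = 2 :=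
      finrank_euclideanSpace_fin
    omega
  -- the fiber as an isometric copy of `ℝ^d`
  set y₀ := secL d x with hy₀def
  have hy₀ : projL d y₀ = x := projL_secL d x
  set n := Module.finrank ℝ V with hn_def
  let φ := (stdOrthonormalBasis ℝ V).repr
  let ψ : EuclideanSpace ℝ (Fin n) → EuclideanSpace ℝ (Fin (d + 2)) :=
    fun u => y₀ + ((φ.symm u : V) : EuclideanSpace ℝ (Fin (d + 2)))
  have hψ_iso : Isometry ψ := by
    apply Isometry.of_dist_eq
    intro u v
    rw [dist_eq_norm, dist_eq_norm]
    have h1 : ψ u - ψ v = ((φ.symm (u - v) : V) : EuclideanSpace ℝ (Fin (d + 2))) := by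
      show y₀ + ((φ.symm u : V) : _) - (y₀ + ((φ.symm v : V) : _)) = _
      rw [map_sub, Submodule.coe_sub]
      abel
    rw [h1, Submodule.norm_coe, LinearIsometryEquiv.norm_map]
  have hψ_range : range ψ = proj d ⁻¹' {x} := by
    ext q
    constructor
    · rintro ⟨u, rfl⟩
      show projL d (y₀ + ((φ.symm u : V) : _)) = x
      have h0 : projL d ((φ.symm u : V) : _) = 0 := (φ.symm u).2
      rw [map_add, hy₀, h0, add_zero]
    · intro hq
      have hq' : projL d q = x := hq
      have hmem : q - y₀ ∈ V := by
        show projL d (q - y₀) = 0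
        rw [map_sub, hq', hy₀, sub_self]
      refine ⟨φ ⟨q - y₀, hmem⟩, ?_⟩
      show y₀ + ((φ.symm (φ ⟨q - y₀, hmem⟩) : V) : _) = q
      rw [LinearIsometryEquiv.symm_apply_apply]
      show y₀ + (q - y₀) = q
      abel
  haveI hHaarn : Measure.IsAddHaarMeasure
      (μH[(d : ℝ)] : Measure (EuclideanSpace ℝ (Fin n))) := by
    have h : ((d : ℝ)) = ((Module.finrank ℝ (EuclideanSpace ℝ (Fin n)) : ℕ) : ℝ) := by
      rw [finrank_euclideanSpace_fin, hnV]
    rw [h]; infer_instance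
  have htrans : ∀ s : Set (EuclideanSpace ℝ (Fin (d + 2))), s ⊆ proj d ⁻¹' {x} →
      μH[(d : ℝ)] s = μH[(d : ℝ)] (ψ ⁻¹' s) := by
    intro s hs
    have h1 : ψ '' (ψ ⁻¹' s) = s := by
      rw [Set.image_preimage_eq_inter_range, hψ_range,
        Set.inter_eq_self_of_subset_left hs]
    conv_lhs => rw [← h1]
    rw [hψ_iso.hausdorffMeasure_image (Or.inl (by positivity))]
  -- the conjugated map on the fiber
  let Lv : V →ₗ[ℝ] V := Lm.restrict hLV
  have hzmem : Taff y₀ - y₀ ∈ V := by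
    show projL d (Taff y₀ - y₀) = 0
    rw [map_sub, hTproj, hy₀, sub_self]
  let z : V := ⟨Taff y₀ - y₀, hzmem⟩
  let Mg : EuclideanSpace ℝ (Fin n) →ₗ[ℝ] EuclideanSpace ℝ (Fin n) :=
    (φ.toLinearEquiv : V →ₗ[ℝ] EuclideanSpace ℝ (Fin n)) ∘ₗ Lv ∘ₗ
      (φ.toLinearEquiv.symm : EuclideanSpace ℝ (Fin n) →ₗ[ℝ] V)
  let g : EuclideanSpace ℝ (Fin n) → EuclideanSpace ℝ (Fin n) := fun u => Mg u + φ z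
  have hψg : ∀ u, ψ (g u) = Taff (ψ u) := by
    intro u
    have e1 : φ.symm (g u) = Lv (φ.symm u) + z := by
      show φ.symm (Mg u + φ z) = Lv (φ.symm u) + z
      rw [map_add, LinearIsometryEquiv.symm_apply_apply]
      congr 1
      show φ.symm ((φ.toLinearEquiv : V →ₗ[ℝ] EuclideanSpace ℝ (Fin n))
        (Lv ((φ.toLinearEquiv.symm : EuclideanSpace ℝ (Fin n) →ₗ[ℝ] V) u))) = Lv (φ.symm u)
      simp
    have hLvcoe : ∀ v : V, ((Lv v : V) : EuclideanSpace ℝ (Fin (d + 2))) = Lm ↑v :=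
      fun v => LinearMap.restrict_coe_apply Lm hLV v
    have hzcoe : ((z : V) : EuclideanSpace ℝ (Fin (d + 2))) = Taff y₀ - y₀ := rfl
    have h1 : ((φ.symm (g u) : V) : EuclideanSpace ℝ (Fin (d + 2))) =
        Lm ((φ.symm u : V) : EuclideanSpace ℝ (Fin (d + 2))) + (Taff y₀ - y₀) := by
      rw [e1, Submodule.coe_add, hLvcoe, hzcoe]
    show y₀ + ((φ.symm (g u) : V) : _) = Taff (y₀ + ((φ.symm u : V) : _))
    rw [h1]
    show y₀ + (L ((φ.symm u : V) : _) + (w' 0 + L (y₀ - w 0) - y₀)) =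
      w' 0 + L (y₀ + ((φ.symm u : V) : _) - w 0)
    rw [show y₀ + ((φ.symm u : V) : EuclideanSpace ℝ (Fin (d + 2))) - w 0 =
      (y₀ - w 0) + ((φ.symm u : V) : EuclideanSpace ℝ (Fin (d + 2))) by abel, map_add]
    abel
  have hA' : ψ ⁻¹' (convexHull ℝ (range w') ∩ proj d ⁻¹' {x}) =
      g '' (ψ ⁻¹' (convexHull ℝ (range w) ∩ proj d ⁻¹' {x})) := by
    rw [hS']
    ext u
    simp only [mem_preimage, mem_image]
    constructor
    · rintro ⟨s, hs, hsu⟩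
      obtain ⟨a, ha⟩ : s ∈ range ψ := by rw [hψ_range]; exact hs.2
      refine ⟨a, ?_, ?_⟩
      · show ψ a ∈ _
        rw [ha]; exact hs
      · apply hψ_iso.injective
        rw [hψg a, ha, hsu]
    · rintro ⟨a, ha, rfl⟩
      exact ⟨ψ a, ha, (hψg a).symm⟩
  have hg_decomp : ∀ s : Set (EuclideanSpace ℝ (Fin n)),
      g '' s = (fun y => φ z + y) '' (⇑Mg '' s) := by
    intro s
    rw [Set.image_image]
    apply Set.image_congr'
    intro u
    show Mg u + φ z = φ z + Mg u
    exact add_comm _ _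
  have hdet1 : LinearMap.det Mg = LinearMap.det Lv := LinearMap.det_conj Lv φ.toLinearEquiv
  -- determinant of `L` equals determinant of its restriction to the kernel
  let W' : Submodule ℝ (EuclideanSpace ℝ (Fin (d + 2))) := LinearMap.range (secL d)
  have hcompl : IsCompl V W' := by
    constructor
    · rw [Submodule.disjoint_def]
      intro q hqV hqW
      obtain ⟨y, rfl⟩ := hqW
      have h0 : projL d (secL d y) = 0 := hqV
      rw [projL_secL] at h0
      rw [h0, map_zero]
    · rw [codisjoint_iff, eq_top_iff]
      intro q _
      rw [Submodule.mem_sup]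
      refine ⟨q - secL d (projL d q), ?_, secL d (projL d q), ⟨projL d q, rfl⟩, by abel⟩
      show projL d (q - secL d (projL d q)) = 0
      rw [map_sub, projL_secL, sub_self]
  let e := Submodule.prodEquivOfIsCompl V W' hcompl
  have he : ∀ vw : V × W', e vw = (vw.1 : EuclideanSpace ℝ (Fin (d + 2))) + (vw.2 : _) := by
    intro vw
    have h0 : (e : V × W' →ₗ[ℝ] EuclideanSpace ℝ (Fin (d + 2))) vw =
        (V.subtype.coprod W'.subtype) vw := by
      rw [Submodule.coe_prodEquivOfIsCompl]
    simpa [LinearMap.coprod_apply] using h0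
  let f₀ : V × W' →ₗ[ℝ] V × W' :=
    (e.symm : EuclideanSpace ℝ (Fin (d + 2)) →ₗ[ℝ] V × W') ∘ₗ Lm ∘ₗ
      (e : V × W' →ₗ[ℝ] EuclideanSpace ℝ (Fin (d + 2)))
  have hf₀ : ∀ vw : V × W', f₀ vw = e.symm (Lm (e vw)) := fun vw => rfl
  have hc2 : ∀ vw : V × W', (f₀ vw).2 = vw.2 := by
    intro vw
    have hmem : Lm (e vw) - (vw.2 : EuclideanSpace ℝ (Fin (d + 2))) ∈ V := by
      show projL d (Lm (e vw) - (vw.2 : EuclideanSpace ℝ (Fin (d + 2)))) = 0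
      have hLmproj : projL d (Lm (e vw)) = projL d (e vw) := hprojL (e vw)
      have hv1 : projL d ((vw.1 : EuclideanSpace ℝ (Fin (d + 2)))) = 0 := vw.1.2
      rw [map_sub, hLmproj, he vw, map_add, hv1, zero_add, sub_self]
    have hkey : f₀ vw = (⟨Lm (e vw) - ↑vw.2, hmem⟩, vw.2) := by
      apply e.injective
      rw [hf₀, LinearEquiv.apply_symm_apply, he (⟨Lm (e vw) - ↑vw.2, hmem⟩, vw.2)]
      show Lm (e vw) = (Lm (e vw) - ↑vw.2) + ↑vw.2
      abel
    rw [hkey]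
  have hc1 : ∀ v : V, (f₀ (v, 0)).1 = Lv v := by
    intro v
    have hkey : f₀ (v, (0 : W')) = (Lv v, 0) := by
      apply e.injective
      rw [hf₀, LinearEquiv.apply_symm_apply, he (v, (0 : W')), he (Lv v, 0)]
      show Lm ((v : EuclideanSpace ℝ (Fin (d + 2))) + ((0 : W') : EuclideanSpace ℝ (Fin (d + 2)))) =
        ((Lv v : V) : EuclideanSpace ℝ (Fin (d + 2))) + ((0 : W') : EuclideanSpace ℝ (Fin (d + 2)))
      rw [ZeroMemClass.coe_zero, add_zero, add_zero]
      exact (LinearMap.restrict_coe_apply Lm hLV v).symm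
    rw [hkey]
  have hdet2 : LinearMap.det Lm = LinearMap.det Lv := by
    have hconj : ((e : V × W' →ₗ[ℝ] EuclideanSpace ℝ (Fin (d + 2))) ∘ₗ f₀ ∘ₗ
        (e.symm : EuclideanSpace ℝ (Fin (d + 2)) →ₗ[ℝ] V × W')) = Lm := by
      ext q
      simp [f₀]
    calc LinearMap.det Lm
        = LinearMap.det ((e : V × W' →ₗ[ℝ] EuclideanSpace ℝ (Fin (d + 2))) ∘ₗ f₀ ∘ₗ
            (e.symm : EuclideanSpace ℝ (Fin (d + 2)) →ₗ[ℝ] V × W')) := by rw [hconj]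
      _ = LinearMap.det f₀ := LinearMap.det_conj f₀ e
      _ = LinearMap.det Lv := det_eq_det_fst f₀ Lv hc2 hc1
  have hnum : μH[(d : ℝ)] (convexHull ℝ (range w') ∩ proj d ⁻¹' {x}) =
      ENNReal.ofReal |LinearMap.det Lm| *
        μH[(d : ℝ)] (convexHull ℝ (range w) ∩ proj d ⁻¹' {x}) := by
    rw [htrans _ inter_subset_right, htrans _ inter_subset_right, hA', hg_decomp,
      Set.image_add_left, measure_preimage_add, Measure.addHaar_image_linearMap,
      hdet1, ← hdet2]
  have hdet_ne : |LinearMap.det Lm| ≠ 0 := by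
    have hu : IsUnit (LinearMap.det Lm) := LinearEquiv.isUnit_det' L
    exact abs_ne_zero.mpr hu.ne_zero
  rw [hnum, hden, ENNReal.toReal_mul, ENNReal.toReal_mul,
    ENNReal.toReal_ofReal (abs_nonneg _)]
  exact (mul_div_mul_left _ _ hdet_ne).symm
end
end

section
/- Let K be a multiset of at least 3 points of ℝ² whose convex hull has positive area. Then the area-normalized simplex spline Q[K] is nonnegative everywhere on ℝ², and Q[K](x) > 0 for every x in the interior of conv(K). -/
open MeasureTheory Set
set_option maxHeartbeats 1000000

noncomputable section

/-- The underlying set of points of a multiset of knots in `ℝ²`. -/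
def knotSet (K : Multiset (ℝ × ℝ)) : Set (ℝ × ℝ) := {x | x ∈ K}

/-- `IsQFamily A Q` says that `Q` is a family of area-normalized simplex splines,
normalized by the area `A` (the area of the reference triangle `Δ`):
* `Q K = 0` whenever `conv K` has zero area;
* if `conv K` has positive area and `|K| = 3`, then `Q K` is `A / area (conv K)` times the
  indicator function of a half-open version `H` of the convex hull of `K`
  (a set squeezed between the interior and the closure of `conv K`);
* if `conv K` has positive area and `|K| > 3`, then `Q K x = ∑ⱼ βⱼ * Q (K ∖ {pⱼ}) x` for every
  barycentric representation `x = ∑ⱼ βⱼ pⱼ`, `∑ⱼ βⱼ = 1`, in terms of the distinct points `pⱼ`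
  of `K`. -/
def IsQFamily (A : ℝ) (Q : Multiset (ℝ × ℝ) → (ℝ × ℝ) → ℝ) : Prop :=
  (∀ K : Multiset (ℝ × ℝ), volume (convexHull ℝ (knotSet K)) = 0 → ∀ x, Q K x = 0) ∧
  (∀ K : Multiset (ℝ × ℝ), Multiset.card K = 3 →
    0 < volume (convexHull ℝ (knotSet K)) →
    ∃ H : Set (ℝ × ℝ), interior (convexHull ℝ (knotSet K)) ⊆ H ∧
      H ⊆ convexHull ℝ (knotSet K) ∧
      ∀ x, Q K x = (A / (volume (convexHull ℝ (knotSet K))).toReal) * H.indicator 1 x) ∧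
  (∀ K : Multiset (ℝ × ℝ), 3 < Multiset.card K →
    0 < volume (convexHull ℝ (knotSet K)) →
    ∀ x : ℝ × ℝ, ∀ β : (ℝ × ℝ) → ℝ,
      (∑ p ∈ K.toFinset, β p) = 1 → (∑ p ∈ K.toFinset, β p • p) = x →
      Q K x = ∑ p ∈ K.toFinset, β p * Q (K.erase p) x)


lemma knotSet_mem {K : Multiset (ℝ × ℝ)} {x : ℝ × ℝ} : x ∈ knotSet K ↔ x ∈ K := Iff.rfl

lemma knotSet_coe (K : Multiset (ℝ × ℝ)) : knotSet K = ↑K.toFinset := by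
  ext x; simp [knotSet]

lemma knotSet_finite (K : Multiset (ℝ × ℝ)) : (knotSet K).Finite := by
  rw [knotSet_coe]; exact K.toFinset.finite_toSet

lemma knotSet_cons (e : ℝ × ℝ) (K : Multiset (ℝ × ℝ)) :
    knotSet (e ::ₘ K) = insert e (knotSet K) := by
  ext x; simp [knotSet]

lemma knotSet_erase_subset (K : Multiset (ℝ × ℝ)) (p : ℝ × ℝ) :
    knotSet (K.erase p) ⊆ knotSet K := fun x hx => Multiset.mem_of_le (K.erase_le p) hx

lemma volPos_of_interior_nonempty {S : Set (ℝ × ℝ)}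
    (h : (interior (convexHull ℝ S)).Nonempty) : 0 < volume (convexHull ℝ S) :=
  lt_of_lt_of_le (isOpen_interior.measure_pos volume h) (measure_mono interior_subset)

lemma affineSpan_ne_top_of_collinear {S : Set (ℝ × ℝ)} (h : Collinear ℝ S) :
    affineSpan ℝ S ≠ ⊤ := by
  intro htop
  have h1 : Module.rank ℝ (vectorSpan ℝ S) ≤ 1 := h
  rw [← direction_affineSpan, htop, AffineSubspace.direction_top] at h1
  rw [rank_top] at h1
  have : Module.rank ℝ (ℝ × ℝ) = 2 := by
    rw [rank_prod, Module.rank_self]; norm_num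
  rw [this] at h1
  norm_num at h1

lemma vol_zero_of_collinear {S : Set (ℝ × ℝ)} (h : Collinear ℝ S) :
    volume (convexHull ℝ S) = 0 := by
  have hsub : convexHull ℝ S ⊆ (affineSpan ℝ S : Set (ℝ × ℝ)) :=
    convexHull_subset_affineSpan S
  exact measure_mono_null hsub
    (Measure.addHaar_affineSubspace _ _ (affineSpan_ne_top_of_collinear h))

lemma not_collinear_of_volPos {S : Set (ℝ × ℝ)} (h : 0 < volume (convexHull ℝ S)) :
    ¬ Collinear ℝ S := fun hc => h.ne' (vol_zero_of_collinear hc)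

lemma exists_indep_triple {S : Set (ℝ × ℝ)} (h : ¬ Collinear ℝ S) :
    ∃ v : Fin 3 → ℝ × ℝ, AffineIndependent ℝ v ∧ ∀ i, v i ∈ S := by
  by_cases hss : S.Subsingleton
  · rcases hss.eq_empty_or_singleton with rfl | ⟨p, rfl⟩
    · exact absurd (collinear_empty ℝ _) h
    · exact absurd (collinear_singleton ℝ p) h
  obtain ⟨a, ha, b, hb, hab⟩ := not_subsingleton_iff.mp hss
  by_cases hc : ∃ c ∈ S, ¬ Collinear ℝ ({a, b, c} : Set (ℝ × ℝ))
  · obtain ⟨c, hcS, hcol⟩ := hc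
    refine ⟨![a, b, c], ?_, ?_⟩
    · exact affineIndependent_iff_not_collinear_set.mpr hcol
    · intro i; fin_cases i <;> assumption
  · push_neg at hc
    exfalso
    apply h
    rw [collinear_iff_of_mem ha]
    refine ⟨b - a, fun p hp => ?_⟩
    have hcol := hc p hp
    have hmem : p ∈ line[ℝ, a, b] :=
      hcol.mem_affineSpan_of_mem_of_ne (by simp) (by simp) (by simp) hab
    have hmem' : (p - a) +ᵥ a ∈ line[ℝ, a, b] := by simpa using hmem
    rw [vadd_left_mem_affineSpan_pair] at hmem'
    obtain ⟨r, hr⟩ := hmem'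
    refine ⟨r, ?_⟩
    have : r • (b - a) = p - a := by simpa using hr
    simp [this]

lemma span_top_of_triple {v : Fin 3 → ℝ × ℝ} (hv : AffineIndependent ℝ v) :
    affineSpan ℝ (range v) = ⊤ := by
  rw [hv.affineSpan_eq_top_iff_card_eq_finrank_add_one]
  simp

lemma interiorNonempty_of_not_collinear {S : Set (ℝ × ℝ)} (h : ¬ Collinear ℝ S) :
    (interior (convexHull ℝ S)).Nonempty := by
  obtain ⟨v, hv, hvS⟩ := exists_indep_triple h
  have h1 : (interior (convexHull ℝ (range v))).Nonempty :=
    interior_convexHull_nonempty_iff_affineSpan_eq_top.mpr (span_top_of_triple hv)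
  exact h1.mono (interior_mono (convexHull_mono (range_subset_iff.mpr hvS)))

lemma interiorNonempty_of_volPos {S : Set (ℝ × ℝ)} (h : 0 < volume (convexHull ℝ S)) :
    (interior (convexHull ℝ S)).Nonempty :=
  interiorNonempty_of_not_collinear (not_collinear_of_volPos h)

lemma volPos_of_not_collinear {S : Set (ℝ × ℝ)} (h : ¬ Collinear ℝ S) :
    0 < volume (convexHull ℝ S) :=
  volPos_of_interior_nonempty (interiorNonempty_of_not_collinear h)

open Classical in
/-- Any point has an affine representation over the distinct points of `K`. -/
lemma exists_affine_rep (K : Multiset (ℝ × ℝ))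
    (h : 0 < volume (convexHull ℝ (knotSet K))) (x : ℝ × ℝ) :
    ∃ β : (ℝ × ℝ) → ℝ, (∑ p ∈ K.toFinset, β p) = 1 ∧ (∑ p ∈ K.toFinset, β p • p) = x := by
  obtain ⟨v, hv, hvS⟩ := exists_indep_triple (not_collinear_of_volPos h)
  have hvT : ∀ i, v i ∈ K.toFinset := by
    intro i; have := hvS i; rw [knotSet_coe] at this; exact this
  let b : AffineBasis (Fin 3) ℝ (ℝ × ℝ) := ⟨v, hv, span_top_of_triple hv⟩
  have hbv : ∀ i, b i = v i := fun i => rfl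
  set c : Fin 3 → ℝ := fun i => b.coord i x with hc
  refine ⟨fun q => ∑ i ∈ Finset.univ.filter (fun i => v i = q), c i, ?_, ?_⟩
  · rw [Finset.sum_fiberwise_of_maps_to (fun i _ => hvT i)]
    exact b.sum_coord_apply_eq_one x
  · have : ∀ q ∈ K.toFinset,
        (∑ i ∈ Finset.univ.filter (fun i => v i = q), c i) • q
          = ∑ i ∈ Finset.univ.filter (fun i => v i = q), c i • v i := by
      intro q _
      rw [Finset.sum_smul]
      refine Finset.sum_congr rfl fun i hi => ?_
      rw [(Finset.mem_filter.mp hi).2]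
    rw [Finset.sum_congr rfl this, Finset.sum_fiberwise_of_maps_to (fun i _ => hvT i)]
    exact b.linear_combination_coord_eq_self x

/-- Convex representation for points of the hull. -/
lemma exists_convex_rep (K : Multiset (ℝ × ℝ)) (x : ℝ × ℝ)
    (hx : x ∈ convexHull ℝ (knotSet K)) :
    ∃ w : (ℝ × ℝ) → ℝ, (∀ p ∈ K.toFinset, 0 ≤ w p) ∧
      (∑ p ∈ K.toFinset, w p) = 1 ∧ (∑ p ∈ K.toFinset, w p • p) = x := by
  rw [knotSet_coe, Finset.convexHull_eq] at hx
  obtain ⟨w, hw0, hw1, hwx⟩ := hx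
  refine ⟨w, hw0, hw1, ?_⟩
  rw [Finset.centerMass_eq_of_sum_1 _ id hw1] at hwx
  simpa using hwx

/-- Strictly positive representation for interior points. -/
lemma exists_pos_rep (K : Multiset (ℝ × ℝ)) (x : ℝ × ℝ)
    (hx : x ∈ interior (convexHull ℝ (knotSet K))) :
    ∃ w : (ℝ × ℝ) → ℝ, (∀ p ∈ K.toFinset, 0 < w p) ∧
      (∑ p ∈ K.toFinset, w p) = 1 ∧ (∑ p ∈ K.toFinset, w p • p) = x := by
  have hxc : x ∈ convexHull ℝ (knotSet K) := interior_subset hx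
  have hT : K.toFinset.Nonempty := by
    rcases K.toFinset.eq_empty_or_nonempty with h | h
    · exfalso
      rw [knotSet_coe, h] at hxc
      simp at hxc
    · exact h
  set N : ℝ := (K.toFinset.card : ℝ) with hN
  have hNpos : 0 < N := by
    rw [hN]; exact_mod_cast Finset.card_pos.mpr hT
  set c : ℝ × ℝ := ∑ p ∈ K.toFinset, (N⁻¹ : ℝ) • p with hcdef
  have hcmem : c ∈ convexHull ℝ (knotSet K) := by
    rw [knotSet_coe, Finset.convexHull_eq]
    refine ⟨fun _ => N⁻¹, fun _ _ => by positivity, ?_, ?_⟩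
    · rw [Finset.sum_const, nsmul_eq_mul]
      field_simp
      exact hN.symm
    · rw [Finset.centerMass_eq_of_sum_1]
      · rfl
      · rw [Finset.sum_const, nsmul_eq_mul]; field_simp; exact hN.symm
  have hcsum : (∑ p ∈ K.toFinset, (N⁻¹ : ℝ)) = 1 := by
    rw [Finset.sum_const, nsmul_eq_mul]; field_simp; exact hN.symm
  by_cases hxc' : x = c
  · exact ⟨fun _ => N⁻¹, fun _ _ => by positivity, hcsum, by rw [← hcdef, ← hxc']⟩
  -- pick ε with x + ε • (x - c) ∈ convexHull
  obtain ⟨r, hr, hball⟩ := Metric.isOpen_iff.mp isOpen_interior x hx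
  have hd : (0:ℝ) < ‖x - c‖ := by
    rw [norm_pos_iff]; exact sub_ne_zero_of_ne hxc'
  set ε : ℝ := r / (2 * ‖x - c‖) with hε
  have hεpos : 0 < ε := by positivity
  set x' : ℝ × ℝ := x + ε • (x - c) with hx'
  have hx'mem : x' ∈ convexHull ℝ (knotSet K) := by
    refine interior_subset (hball ?_)
    rw [Metric.mem_ball, dist_eq_norm]
    have : x' - x = ε • (x - c) := by rw [hx']; abel
    rw [this, norm_smul, Real.norm_eq_abs, abs_of_pos hεpos, hε]
    rw [div_mul_eq_mul_div, mul_comm]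
    rw [div_lt_iff₀ (by positivity)]
    nlinarith
  obtain ⟨w', hw'0, hw'1, hw'x⟩ := exists_convex_rep K x' hx'mem
  refine ⟨fun p => (1 / (1 + ε)) * w' p + (ε / (1 + ε)) * N⁻¹, ?_, ?_, ?_⟩
  · intro p hp
    have h1 := hw'0 p hp
    have h2 : 0 < (ε / (1 + ε)) * N⁻¹ := by positivity
    have h3 : 0 ≤ (1 / (1 + ε)) * w' p := mul_nonneg (by positivity) h1
    linarith
  · rw [Finset.sum_add_distrib, ← Finset.mul_sum, ← Finset.mul_sum, hw'1, hcsum]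
    field_simp
  · have expand : ∀ p ∈ K.toFinset,
        ((1 / (1 + ε)) * w' p + (ε / (1 + ε)) * N⁻¹) • p
          = (1 / (1 + ε)) • (w' p • p) + (ε / (1 + ε)) • ((N⁻¹:ℝ) • p) := by
      intro p _
      rw [add_smul, smul_smul, smul_smul]
    rw [Finset.sum_congr rfl expand, Finset.sum_add_distrib, ← Finset.smul_sum, ← Finset.smul_sum,
      hw'x, ← hcdef, hx']
    have h1ε : (1:ℝ) + ε ≠ 0 := by positivity
    match_scalars <;> field_simp <;> ring

/-- In an open nonempty interior of a hull one can find a point avoiding the affine span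
of any collinear set. -/
lemma exists_point_interior_avoid {S : Set (ℝ × ℝ)} (hS : 0 < volume (convexHull ℝ S))
    {L : Set (ℝ × ℝ)} (hL : Collinear ℝ L) :
    ∃ z ∈ interior (convexHull ℝ S), z ∉ (affineSpan ℝ L : Set (ℝ × ℝ)) := by
  by_contra hcon
  push_neg at hcon
  have hsub : interior (convexHull ℝ S) ⊆ (affineSpan ℝ L : Set (ℝ × ℝ)) := hcon
  have h0 : volume (interior (convexHull ℝ S)) = 0 :=
    measure_mono_null hsub (Measure.addHaar_affineSubspace _ _ (affineSpan_ne_top_of_collinear hL))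
  obtain ⟨z, hz⟩ := interiorNonempty_of_volPos hS
  exact absurd h0 (isOpen_interior.measure_pos volume ⟨z, hz⟩).ne'

lemma mem_interior_of_segment {S : Set (ℝ × ℝ)} {z y x : ℝ × ℝ}
    (hz : z ∈ interior (convexHull ℝ S)) (hy : y ∈ S) (hx : x ∈ openSegment ℝ z y) :
    x ∈ interior (convexHull ℝ S) := by
  obtain ⟨a, b, ha, hb, hab, rfl⟩ := hx
  exact (convex_convexHull ℝ S).combo_interior_self_mem_interior hz
    (subset_convexHull ℝ S hy) ha hb.le hab

/-- Choice of an auxiliary point `y` with `x` in the open segment `(z, y)`. -/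
lemma exists_aux_point {U : Set (ℝ × ℝ)} (hU : IsOpen U) {x z : ℝ × ℝ} (hxU : x ∈ U)
    (hz : z ≠ x) {F : Set (ℝ × ℝ)} (hF : F.Finite) :
    ∃ y : ℝ × ℝ, y ∈ U ∧ y ∉ F ∧ x ∈ openSegment ℝ z y ∧ y ≠ x := by
  obtain ⟨r, hr, hball⟩ := Metric.isOpen_iff.mp hU x hxU
  have hd : (0:ℝ) < ‖x - z‖ := by rw [norm_pos_iff]; exact sub_ne_zero_of_ne (fun h => hz h.symm)
  set f : ℝ → ℝ × ℝ := fun ε => x + ε • (x - z) with hf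
  have hinj : Function.Injective f := by
    intro s t hst
    have h1 : s • (x - z) = t • (x - z) := by
      have := hst
      simp only [hf, add_right_inj] at this
      exact this
    have := sub_eq_zero.mpr h1
    rw [← sub_smul] at this
    rcases smul_eq_zero.mp this with h | h
    · exact sub_eq_zero.mp h
    · exact absurd h (by simpa [sub_eq_zero] using (sub_ne_zero_of_ne (fun h => hz h.symm)))
  set I : Set ℝ := Ioo 0 (r / ‖x - z‖) with hI
  have hIinf : I.Infinite := Set.Ioo_infinite (by positivity)
  have hbad : (I ∩ f ⁻¹' F).Finite := ((hF.preimage hinj.injOn)).inter_of_right _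
  obtain ⟨ε, hεI⟩ := (hIinf.diff hbad).nonempty
  have hε0 : 0 < ε := hεI.1.1
  have hεr : ε * ‖x - z‖ < r := by
    have h1 : ε < r / ‖x - z‖ := hεI.1.2
    calc ε * ‖x - z‖ < (r / ‖x - z‖) * ‖x - z‖ := by
          exact mul_lt_mul_of_pos_right h1 hd
      _ = r := by field_simp
  have hyU : f ε ∈ U := by
    apply hball
    rw [Metric.mem_ball, dist_eq_norm]
    have : f ε - x = ε • (x - z) := by simp [hf]
    rw [this, norm_smul, Real.norm_eq_abs, abs_of_pos hε0]
    exact hεr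
  have hyF : f ε ∉ F := by
    intro h
    exact hεI.2 ⟨hεI.1, h⟩
  refine ⟨f ε, hyU, hyF, ?_, ?_⟩
  · refine ⟨ε / (1 + ε), 1 / (1 + ε), by positivity, by positivity, ?_, ?_⟩
    · field_simp; ring
    · show (ε / (1 + ε)) • z + (1 / (1 + ε)) • (x + ε • (x - z)) = x
      match_scalars <;> field_simp <;> ring
  · intro h
    have : ε • (x - z) = 0 := by
      have := h
      simp only [hf] at this
      rwa [add_eq_left] at this
    rcases smul_eq_zero.mp this with h' | h'
    · exact hε0.ne' h'
    · exact hz (by simpa [sub_eq_zero, eq_comm] using h')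

variable {A : ℝ} {Q : Multiset (ℝ × ℝ) → (ℝ × ℝ) → ℝ}

lemma card_erase_ge {K : Multiset (ℝ × ℝ)} {p : ℝ × ℝ} (hp : p ∈ K.toFinset)
    (h4 : 3 < Multiset.card K) : 3 ≤ Multiset.card (K.erase p) := by
  rw [Multiset.card_erase_of_mem (Multiset.mem_toFinset.mp hp), Nat.pred_eq_sub_one]
  omega

/-- Lemma 1: nonnegativity and support. -/
lemma qspline_nonneg_support (hA : 0 ≤ A) (hQ : IsQFamily A Q) :
    ∀ n (K : Multiset (ℝ × ℝ)), Multiset.card K = n → 3 ≤ n →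
      (∀ x, 0 ≤ Q K x) ∧ (∀ x, x ∉ convexHull ℝ (knotSet K) → Q K x = 0) := by
  intro n
  induction n using Nat.strong_induction_on with
  | _ n IH =>
    intro K hcard h3
    by_cases hvol : volume (convexHull ℝ (knotSet K)) = 0
    · exact ⟨fun x => le_of_eq (hQ.1 K hvol x).symm, fun x _ => hQ.1 K hvol x⟩
    have hpos : 0 < volume (convexHull ℝ (knotSet K)) := pos_iff_ne_zero.mpr hvol
    rcases eq_or_lt_of_le h3 with heq | h4
    · -- card = 3
      obtain ⟨H, hH1, hH2, hHval⟩ := hQ.2.1 K (by omega) hpos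
      constructor
      · intro x
        rw [hHval x]
        exact mul_nonneg (div_nonneg hA ENNReal.toReal_nonneg)
          (Set.indicator_apply_nonneg fun _ => zero_le_one)
      · intro x hx
        rw [hHval x, Set.indicator_of_notMem (fun hmem => hx (hH2 hmem))]
        simp
    · -- card > 3
      have h4' : 3 < Multiset.card K := by omega
      have hsupp : ∀ x, x ∉ convexHull ℝ (knotSet K) → Q K x = 0 := by
        intro x hx
        obtain ⟨β, hβ1, hβ2⟩ := exists_affine_rep K hpos x
        rw [hQ.2.2 K h4' hpos x β hβ1 hβ2]
        refine Finset.sum_eq_zero fun p hp => ?_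
        have hx' : x ∉ convexHull ℝ (knotSet (K.erase p)) :=
          fun hmem => hx (convexHull_mono (knotSet_erase_subset K p) hmem)
        have hc : Multiset.card (K.erase p) = n - 1 := by
          rw [Multiset.card_erase_of_mem (Multiset.mem_toFinset.mp hp), hcard]; rfl
        rw [(IH (n-1) (by omega) _ hc (by omega)).2 x hx', mul_zero]
      refine ⟨fun x => ?_, hsupp⟩
      by_cases hx : x ∈ convexHull ℝ (knotSet K)
      · obtain ⟨w, hw0, hw1, hw2⟩ := exists_convex_rep K x hx
        rw [hQ.2.2 K h4' hpos x w hw1 hw2]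
        refine Finset.sum_nonneg fun p hp => mul_nonneg (hw0 p hp) ?_
        have hc : Multiset.card (K.erase p) = n - 1 := by
          rw [Multiset.card_erase_of_mem (Multiset.mem_toFinset.mp hp), hcard]; rfl
        exact (IH (n-1) (by omega) _ hc (by omega)).1 x
      · exact le_of_eq (hsupp x hx).symm

/-- base case positivity -/
lemma base_pos (hA : 0 < A) (hQ : IsQFamily A Q) (K : Multiset (ℝ × ℝ))
    (h3 : Multiset.card K = 3) {x : ℝ × ℝ}
    (hx : x ∈ interior (convexHull ℝ (knotSet K))) : 0 < Q K x := by
  have hpos : 0 < volume (convexHull ℝ (knotSet K)) :=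
    volPos_of_interior_nonempty ⟨x, hx⟩
  have hlt : volume (convexHull ℝ (knotSet K)) < ⊤ :=
    ((knotSet_finite K).isCompact_convexHull (𝕜 := ℝ)).measure_lt_top
  obtain ⟨H, hH1, hH2, hHval⟩ := hQ.2.1 K h3 hpos
  rw [hHval x, Set.indicator_of_mem (hH1 hx)]
  have : (0:ℝ) < (volume (convexHull ℝ (knotSet K))).toReal :=
    ENNReal.toReal_pos hpos.ne' hlt.ne
  have := div_pos hA this
  simpa using this

/-- deletion bound -/
lemma delete_bound (hQ : IsQFamily A Q) {K : Multiset (ℝ × ℝ)} {x : ℝ × ℝ}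
    (h4 : 3 < Multiset.card K) (hx : x ∈ interior (convexHull ℝ (knotSet K)))
    {q : ℝ × ℝ} (hq : q ∈ K.toFinset)
    (hnn : ∀ p ∈ K.toFinset, 0 ≤ Q (K.erase p) x) :
    ∃ c : ℝ, 0 < c ∧ c * Q (K.erase q) x ≤ Q K x := by
  have hpos : 0 < volume (convexHull ℝ (knotSet K)) :=
    volPos_of_interior_nonempty ⟨x, hx⟩
  obtain ⟨w, hw0, hw1, hw2⟩ := exists_pos_rep K x hx
  refine ⟨w q, hw0 q hq, ?_⟩
  rw [hQ.2.2 K h4 hpos x w hw1 hw2]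
  exact Finset.single_le_sum (fun p hp => mul_nonneg (hw0 p hp).le (hnn p hp)) hq

/-- knot insertion identity -/
lemma insert_identity (hQ : IsQFamily A Q) {K : Multiset (ℝ × ℝ)} {e x : ℝ × ℝ}
    (h3 : 3 ≤ Multiset.card K) (he : e ∉ knotSet K)
    (hpos : 0 < volume (convexHull ℝ (knotSet (e ::ₘ K))))
    {w γ : (ℝ × ℝ) → ℝ}
    (hw1 : (∑ p ∈ K.toFinset, w p) = 1) (hw2 : (∑ p ∈ K.toFinset, w p • p) = x)
    (hγ1 : (∑ p ∈ K.toFinset, γ p) = 1) (hγ2 : (∑ p ∈ K.toFinset, γ p • p) = e) :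
    Q K x = ∑ p ∈ K.toFinset, γ p * Q (e ::ₘ K.erase p) x := by
  classical
  have heT : e ∉ K.toFinset := fun h => he (knotSet_mem.mpr (Multiset.mem_toFinset.mp h))
  have htf : (e ::ₘ K).toFinset = insert e K.toFinset := Multiset.toFinset_cons e K
  have hcard : 3 < Multiset.card (e ::ₘ K) := by rw [Multiset.card_cons]; omega
  set β₁ : (ℝ × ℝ) → ℝ := fun q => if q = e then 0 else w q with hβ₁
  set β₂ : (ℝ × ℝ) → ℝ := fun q => if q = e then 1 else w q - γ q with hβ₂
  have hne : ∀ q ∈ K.toFinset, q ≠ e := fun q hq h => heT (h ▸ hq)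
  have hβ₁e : β₁ e = 0 := by simp [hβ₁]
  have hβ₁q : ∀ q ∈ K.toFinset, β₁ q = w q := fun q hq => by simp [hβ₁, hne q hq]
  have hβ₂e : β₂ e = 1 := by simp [hβ₂]
  have hβ₂q : ∀ q ∈ K.toFinset, β₂ q = w q - γ q := fun q hq => by simp [hβ₂, hne q hq]
  have hsum₁ : (∑ p ∈ (e ::ₘ K).toFinset, β₁ p) = 1 := by
    rw [htf, Finset.sum_insert heT, hβ₁e,
      Finset.sum_congr rfl (fun q hq => hβ₁q q hq), hw1]
    ring
  have hvec₁ : (∑ p ∈ (e ::ₘ K).toFinset, β₁ p • p) = x := by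
    rw [htf, Finset.sum_insert heT, hβ₁e,
      Finset.sum_congr rfl (fun q hq => by rw [hβ₁q q hq]), hw2, zero_smul, zero_add]
  have hsum₂ : (∑ p ∈ (e ::ₘ K).toFinset, β₂ p) = 1 := by
    rw [htf, Finset.sum_insert heT, hβ₂e,
      Finset.sum_congr rfl (fun q hq => hβ₂q q hq), Finset.sum_sub_distrib, hw1, hγ1]
    ring
  have hvec₂ : (∑ p ∈ (e ::ₘ K).toFinset, β₂ p • p) = x := by
    rw [htf, Finset.sum_insert heT, hβ₂e,
      Finset.sum_congr rfl (fun q hq => by rw [hβ₂q q hq])]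
    have : (∑ q ∈ K.toFinset, (w q - γ q) • q)
        = (∑ q ∈ K.toFinset, w q • q) - (∑ q ∈ K.toFinset, γ q • q) := by
      rw [← Finset.sum_sub_distrib]
      exact Finset.sum_congr rfl fun q _ => sub_smul _ _ _
    rw [this, hw2, hγ2, one_smul]
    abel
  have hid₁ := hQ.2.2 (e ::ₘ K) hcard hpos x β₁ hsum₁ hvec₁
  have hid₂ := hQ.2.2 (e ::ₘ K) hcard hpos x β₂ hsum₂ hvec₂
  rw [htf, Finset.sum_insert heT, hβ₁e, zero_mul, zero_add] at hid₁
  rw [htf, Finset.sum_insert heT, hβ₂e, one_mul] at hid₂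
  rw [Multiset.erase_cons_head] at hid₂
  have herase : ∀ q ∈ K.toFinset, (e ::ₘ K).erase q = e ::ₘ K.erase q := by
    intro q hq
    exact Multiset.erase_cons_tail _ (fun h : e = q => heT (h ▸ hq))
  have hid₁' : Q (e ::ₘ K) x = ∑ q ∈ K.toFinset, w q * Q (e ::ₘ K.erase q) x := by
    rw [hid₁]
    refine Finset.sum_congr rfl fun q hq => ?_
    rw [hβ₁q q hq, herase q hq]
  have hid₂' : Q (e ::ₘ K) x
      = Q K x + ∑ q ∈ K.toFinset, (w q - γ q) * Q (e ::ₘ K.erase q) x := by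
    rw [hid₂]
    congr 1
    refine Finset.sum_congr rfl fun q hq => ?_
    rw [hβ₂q q hq, herase q hq]
  have := hid₁'.symm.trans hid₂'
  have hexp : ∑ q ∈ K.toFinset, (w q - γ q) * Q (e ::ₘ K.erase q) x
      = (∑ q ∈ K.toFinset, w q * Q (e ::ₘ K.erase q) x)
        - ∑ q ∈ K.toFinset, γ q * Q (e ::ₘ K.erase q) x := by
    rw [← Finset.sum_sub_distrib]
    exact Finset.sum_congr rfl fun q _ => by ring
  rw [hexp] at this
  linarith

/-- Claim D : a point whose removal keeps positive area, avoiding a given point of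
multiplicity at most one. -/
lemma exists_good_erase (M : Multiset (ℝ × ℝ)) (h4 : 4 ≤ Multiset.card M)
    (hpos : 0 < volume (convexHull ℝ (knotSet M))) (y : ℝ × ℝ) (hy : M.count y ≤ 1) :
    ∃ p ∈ M.toFinset, p ≠ y ∧ 0 < volume (convexHull ℝ (knotSet (M.erase p))) := by
  classical
  obtain ⟨v, hv, hvS⟩ := exists_indep_triple (not_collinear_of_volPos hpos)
  have hvM : ∀ i, v i ∈ M := fun i => knotSet_mem.mp (hvS i)
  have hvnc : ¬ Collinear ℝ ({v 0, v 1, v 2} : Set (ℝ × ℝ)) := by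
    rw [← affineIndependent_iff_not_collinear_set]
    have : ![v 0, v 1, v 2] = v := by
      funext i; fin_cases i <;> rfl
    rwa [this]
  -- case: some point of multiplicity ≥ 2 other than y
  by_cases case1 : ∃ p ∈ M.toFinset, p ≠ y ∧ 2 ≤ M.count p
  · obtain ⟨p, hp, hpy, hp2⟩ := case1
    refine ⟨p, hp, hpy, ?_⟩
    have : knotSet (M.erase p) = knotSet M := by
      ext z
      simp only [knotSet_mem]
      constructor
      · exact fun h => Multiset.mem_of_le (M.erase_le p) h
      · intro h
        by_cases hzp : z = p
        · subst hzp
          rw [← Multiset.count_pos, Multiset.count_erase_self]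
          omega
        · exact Multiset.mem_erase_of_ne hzp |>.mpr h
    rwa [this]
  by_cases case2 : ∃ p ∈ M.toFinset, p ≠ y ∧ p ≠ v 0 ∧ p ≠ v 1 ∧ p ≠ v 2
  · obtain ⟨p, hp, hpy, h0, h1, h2⟩ := case2
    refine ⟨p, hp, hpy, ?_⟩
    apply volPos_of_not_collinear
    intro hcol
    apply hvnc
    refine hcol.subset ?_
    intro z hz
    simp only [mem_insert_iff, mem_singleton_iff] at hz
    show z ∈ knotSet (M.erase p)
    rw [knotSet_mem]
    rcases hz with rfl | rfl | rfl
    · exact (Multiset.mem_erase_of_ne (Ne.symm h0)).mpr (hvM 0)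
    · exact (Multiset.mem_erase_of_ne (Ne.symm h1)).mpr (hvM 1)
    · exact (Multiset.mem_erase_of_ne (Ne.symm h2)).mpr (hvM 2)
  · push_neg at case1 case2
    have hvinj : Function.Injective v := hv.injective
    set T : Finset (ℝ × ℝ) := {v 0, v 1, v 2, y} with hT
    have hsub : M.toFinset ⊆ T := by
      intro p hp
      by_cases hpy : p = y
      · subst hpy; simp [hT]
      by_cases h0 : p = v 0
      · subst h0; simp [hT]
      by_cases h1 : p = v 1
      · subst h1; simp [hT]
      have := case2 p hp hpy h0 h1
      subst this; simp [hT]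
    have hcount1 : ∀ p ∈ M.toFinset, M.count p = 1 := by
      intro p hp
      have hmem : p ∈ M := Multiset.mem_toFinset.mp hp
      have hge : 1 ≤ M.count p := Multiset.one_le_count_iff_mem.mpr hmem
      by_cases hpy : p = y
      · subst hpy; omega
      · have := case1 p hp hpy; omega
    have hcardM : Multiset.card M = M.toFinset.card := by
      rw [← Multiset.toFinset_sum_count_eq M]
      rw [Finset.sum_congr rfl hcount1]
      simp
    have hTcard : T.card ≤ 4 := by
      apply le_trans (Finset.card_insert_le _ _)
      have : ({v 1, v 2, y} : Finset (ℝ × ℝ)).card ≤ 3 := by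
        apply le_trans (Finset.card_insert_le _ _)
        have : ({v 2, y} : Finset (ℝ × ℝ)).card ≤ 2 := Finset.card_insert_le _ _
        omega
      omega
    have hcard4 : M.toFinset.card = 4 := by
      have h1 : M.toFinset.card ≤ 4 := le_trans (Finset.card_le_card hsub) hTcard
      omega
    have hTeq : M.toFinset = T := Finset.eq_of_subset_of_card_le hsub (by omega)
    rw [hTeq] at hcard4
    have hyv : y ≠ v 0 ∧ y ≠ v 1 ∧ y ≠ v 2 := by
      have htc : ({v 0, v 1, v 2} : Finset (ℝ × ℝ)).card ≤ 3 := by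
        apply le_trans (Finset.card_insert_le _ _)
        have h2 : ({v 1, v 2} : Finset (ℝ × ℝ)).card ≤ 2 := Finset.card_insert_le _ _
        omega
      refine ⟨?_, ?_, ?_⟩ <;> intro h <;>
      · have hsub2 : T ⊆ ({v 0, v 1, v 2} : Finset (ℝ × ℝ)) := by
          intro z hz
          simp only [hT, Finset.mem_insert, Finset.mem_singleton] at hz
          simp only [Finset.mem_insert, Finset.mem_singleton]
          rcases hz with rfl | rfl | rfl | rfl <;> simp [h]
        have := Finset.card_le_card hsub2
        omega
    have hvmemT : ∀ i, v i ∈ M.toFinset := fun i => Multiset.mem_toFinset.mpr (hvM i)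
    -- helper: knotSet of erase of a count-1 element
    have herase : ∀ p ∈ M.toFinset, knotSet (M.erase p) = (↑M.toFinset : Set (ℝ × ℝ)) \ {p} := by
      intro p hp
      ext z
      simp only [knotSet_mem, Set.mem_diff, Set.mem_singleton_iff, Finset.coe_sort_coe,
        Finset.mem_coe, Multiset.mem_toFinset]
      constructor
      · intro h
        by_cases hzp : z = p
        · exfalso
          rw [hzp] at h
          have hc := hcount1 p hp
          have hce := Multiset.count_erase_self p M
          have hpos' : 0 < Multiset.count p (M.erase p) := Multiset.count_pos.mpr h
          omega
        · exact ⟨Multiset.mem_of_le (M.erase_le p) h, hzp⟩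
      · rintro ⟨hz, hzp⟩
        exact (Multiset.mem_erase_of_ne hzp).mpr hz
    -- find a good vertex among the triple
    have hfind : ∃ i : Fin 3, ¬ Collinear ℝ ((↑M.toFinset : Set (ℝ × ℝ)) \ {v i}) := by
      by_contra hall
      push_neg at hall
      have hC : ∀ i : Fin 3, Collinear ℝ ((↑M.toFinset : Set (ℝ × ℝ)) \ {v i}) := hall
      have hset : ∀ i : Fin 3, ((↑M.toFinset : Set (ℝ × ℝ)) \ {v i}) =
          (↑(T.erase (v i)) : Set (ℝ × ℝ)) := by
        intro i
        rw [hTeq]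
        ext z
        simp [Finset.mem_erase, and_comm]
      have hC0 : Collinear ℝ ({v 1, v 2, y} : Set (ℝ × ℝ)) := by
        refine (hC 0).subset ?_
        intro z hz
        simp only [mem_insert_iff, mem_singleton_iff] at hz
        constructor
        · rw [hTeq]
          rcases hz with rfl | rfl | rfl <;> simp [hT]
        · simp only [Set.mem_singleton_iff]
          rcases hz with rfl | rfl | rfl
          · exact fun h => absurd (hvinj h) (by decide)
          · exact fun h => absurd (hvinj h) (by decide)
          · exact hyv.1
      have hC1 : Collinear ℝ ({v 0, v 2, y} : Set (ℝ × ℝ)) := by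
        refine (hC 1).subset ?_
        intro z hz
        simp only [mem_insert_iff, mem_singleton_iff] at hz
        constructor
        · rw [hTeq]
          rcases hz with rfl | rfl | rfl <;> simp [hT]
        · simp only [Set.mem_singleton_iff]
          rcases hz with rfl | rfl | rfl
          · exact fun h => absurd (hvinj h) (by decide)
          · exact fun h => absurd (hvinj h) (by decide)
          · exact hyv.2.1
      have hunion : Collinear ℝ (insert (v 0) ({v 1, v 2, y} : Set (ℝ × ℝ))) := by
        rw [hC0.collinear_insert_iff_of_ne (p₂ := v 2) (p₃ := y) (by simp) (by simp)
          (Ne.symm hyv.2.2)]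
        have : ({v 0, v 2, y} : Set (ℝ × ℝ)) = {v 0, v 2, y} := rfl
        exact hC1
      apply hvnc
      refine hunion.subset ?_
      intro z hz
      simp only [mem_insert_iff, mem_singleton_iff] at hz ⊢
      tauto
    obtain ⟨i, hi⟩ := hfind
    refine ⟨v i, hvmemT i, ?_, ?_⟩
    · intro h
      fin_cases i
      · exact hyv.1 h.symm
      · exact hyv.2.1 h.symm
      · exact hyv.2.2 h.symm
    · rw [herase (v i) (hvmemT i)]
      exact volPos_of_not_collinear hi
/-- All Q values are nonnegative (packaged). -/
lemma nonneg_all (hA : 0 ≤ A) (hQ : IsQFamily A Q) (M : Multiset (ℝ × ℝ))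
    (h3 : 3 ≤ Multiset.card M) (x : ℝ × ℝ) : 0 ≤ Q M x :=
  (qspline_nonneg_support hA hQ _ M rfl h3).1 x

/-- The knot insertion step bound. -/
lemma insert_step (hA : 0 ≤ A) (hQ : IsQFamily A Q) {K : Multiset (ℝ × ℝ)} {x e p : ℝ × ℝ}
    (h3 : 3 ≤ Multiset.card K) (hpos : 0 < volume (convexHull ℝ (knotSet K)))
    (he : e ∉ knotSet K) (heI : e ∈ interior (convexHull ℝ (knotSet K)))
    (hp : p ∈ K.toFinset) :
    ∃ c : ℝ, 0 < c ∧ c * Q (e ::ₘ K.erase p) x ≤ Q K x := by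
  obtain ⟨γ, hγ0, hγ1, hγ2⟩ := exists_pos_rep K e heI
  obtain ⟨w, hw1, hw2⟩ := exists_affine_rep K hpos x
  have hpos' : 0 < volume (convexHull ℝ (knotSet (e ::ₘ K))) := by
    refine lt_of_lt_of_le hpos (measure_mono (convexHull_mono ?_))
    rw [knotSet_cons]; exact subset_insert _ _
  rw [insert_identity hQ h3 he hpos' hw1 hw2 hγ1 hγ2]
  refine ⟨γ p, hγ0 p hp, ?_⟩
  refine Finset.single_le_sum (f := fun q => γ q * Q (e ::ₘ K.erase q) x)
    (fun q hq => mul_nonneg (hγ0 q hq).le ?_) hp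
  refine nonneg_all hA hQ _ ?_ x
  rw [Multiset.card_cons, Multiset.card_erase_of_mem (Multiset.mem_toFinset.mp hq),
    Nat.pred_eq_sub_one]
  omega

/-- Triangle descent: positivity for any multiset containing a triangle around `x`. -/
lemma descend (hA : 0 < A) (hQ : IsQFamily A Q) (y₁ y₂ y₃ : ℝ × ℝ) (x : ℝ × ℝ)
    (hxY : x ∈ interior (convexHull ℝ ({y₁, y₂, y₃} : Set (ℝ × ℝ)))) :
    ∀ n (M : Multiset (ℝ × ℝ)), Multiset.card M = n →
      ({y₁, y₂, y₃} : Multiset (ℝ × ℝ)) ≤ M → 0 < Q M x := by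
  intro n
  induction n using Nat.strong_induction_on with
  | _ n IH =>
    intro M hcard hYM
    have hY3 : Multiset.card ({y₁, y₂, y₃} : Multiset (ℝ × ℝ)) = 3 := rfl
    have h3 : 3 ≤ n := by
      have := Multiset.card_le_card hYM
      rw [hY3, hcard] at this; exact this
    have hYsub : ({y₁, y₂, y₃} : Set (ℝ × ℝ)) ⊆ knotSet M := by
      intro z hz
      rw [knotSet_mem]
      refine Multiset.mem_of_le hYM ?_
      simp only [Set.mem_insert_iff, Set.mem_singleton_iff] at hz
      rcases hz with rfl | rfl | rfl <;> simp
    have hx : x ∈ interior (convexHull ℝ (knotSet M)) :=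
      interior_mono (convexHull_mono hYsub) hxY
    rcases eq_or_lt_of_le h3 with heq | h4
    · -- M = {y₁, y₂, y₃}
      have : ({y₁, y₂, y₃} : Multiset (ℝ × ℝ)) = M := by
        apply Multiset.eq_of_le_of_card_le hYM
        rw [hcard, ← heq, hY3]
      rw [← this] at hx ⊢
      exact base_pos hA hQ _ hY3 hx
    · -- descend
      have hlt : ¬ (M ≤ ({y₁, y₂, y₃} : Multiset (ℝ × ℝ))) := by
        intro hle
        have := Multiset.card_le_card hle
        rw [hY3, hcard] at this; omega
      rw [Multiset.le_iff_count] at hlt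
      push_neg at hlt
      obtain ⟨q, hq⟩ := hlt
      have hqY : Multiset.count q ({y₁, y₂, y₃} : Multiset (ℝ × ℝ)) < Multiset.count q M := hq
      have hqM : q ∈ M.toFinset := by
        rw [Multiset.mem_toFinset, ← Multiset.count_pos]; omega
      have hYe : ({y₁, y₂, y₃} : Multiset (ℝ × ℝ)) ≤ M.erase q := by
        rw [Multiset.le_iff_count]
        intro a
        by_cases haq : a = q
        · subst haq
          rw [Multiset.count_erase_self]
          omega
        · rw [Multiset.count_erase_of_ne haq]
          exact Multiset.le_iff_count.mp hYM a
      have hcard' : Multiset.card (M.erase q) = n - 1 := by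
        rw [Multiset.card_erase_of_mem (Multiset.mem_toFinset.mp hqM), hcard,
          Nat.pred_eq_sub_one]
      have hrec : 0 < Q (M.erase q) x := IH (n-1) (by omega) _ hcard' hYe
      have h4' : 3 < Multiset.card M := by omega
      obtain ⟨c, hc, hcle⟩ := delete_bound hQ h4' hx hqM (fun p hp => by
        refine nonneg_all hA.le hQ _ ?_ x
        rw [Multiset.card_erase_of_mem (Multiset.mem_toFinset.mp hp), hcard,
          Nat.pred_eq_sub_one]
        omega)
      exact lt_of_lt_of_le (mul_pos hc hrec) hcle
lemma qspline_pos (hA : 0 < A) (hQ : IsQFamily A Q) (K : Multiset (ℝ × ℝ))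
    (h3 : 3 ≤ Multiset.card K) (x : ℝ × ℝ)
    (hx : x ∈ interior (convexHull ℝ (knotSet K))) : 0 < Q K x := by
  classical
  rcases eq_or_lt_of_le h3 with heq | h4
  · exact base_pos hA hQ K heq.symm hx
  have hpos : 0 < volume (convexHull ℝ (knotSet K)) := volPos_of_interior_nonempty ⟨x, hx⟩
  -- ### step 1
  obtain ⟨y₀, hy₀⟩ := (knotSet_finite K).infinite_compl.nonempty
  have hy₀c : K.count y₀ ≤ 1 := by
    rw [Multiset.count_eq_zero.mpr (fun h => hy₀ (knotSet_mem.mpr h))]; omega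
  obtain ⟨p₁, hp₁T, -, hpos1⟩ := exists_good_erase K (by omega) hpos y₀ hy₀c
  obtain ⟨z₁, hz₁I, hz₁L⟩ := exists_point_interior_avoid hpos1 (collinear_singleton ℝ x)
  have hz₁x : z₁ ≠ x := by
    intro h
    subst h
    exact hz₁L (subset_affineSpan ℝ _ (Set.mem_singleton z₁))
  obtain ⟨y₁, hy₁U, hy₁F, hy₁seg, hy₁x⟩ :=
    exists_aux_point isOpen_interior hx hz₁x (knotSet_finite K)
  set K₁ : Multiset (ℝ × ℝ) := y₁ ::ₘ K.erase p₁ with hK₁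
  have hK₁card : Multiset.card K₁ = Multiset.card K := by
    rw [hK₁, Multiset.card_cons, Multiset.card_erase_of_mem (Multiset.mem_toFinset.mp hp₁T),
      Nat.pred_eq_sub_one]
    omega
  have hsub1 : knotSet (K.erase p₁) ⊆ knotSet K₁ := by
    rw [hK₁, knotSet_cons]; exact subset_insert _ _
  have hy₁K₁ : y₁ ∈ knotSet K₁ := by rw [hK₁, knotSet_cons]; exact mem_insert _ _
  have hxK₁ : x ∈ interior (convexHull ℝ (knotSet K₁)) :=
    mem_interior_of_segment (interior_mono (convexHull_mono hsub1) hz₁I) hy₁K₁ hy₁seg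
  have hposK₁ : 0 < volume (convexHull ℝ (knotSet K₁)) :=
    volPos_of_interior_nonempty ⟨x, hxK₁⟩
  obtain ⟨c₁, hc₁, hb₁⟩ := insert_step (x := x) hA.le hQ h3 hpos hy₁F hy₁U hp₁T
  -- ### step 2
  have hy₁notK : y₁ ∉ K.erase p₁ :=
    fun h => hy₁F (knotSet_mem.mpr (Multiset.mem_of_le (K.erase_le p₁) h))
  have hcy₁ : K₁.count y₁ ≤ 1 := by
    rw [hK₁, Multiset.count_cons_self, Multiset.count_eq_zero.mpr hy₁notK]
  obtain ⟨p₂, hp₂T, hp₂y₁, hpos2⟩ := exists_good_erase K₁ (by omega) hposK₁ y₁ hcy₁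
  obtain ⟨z₂, hz₂I, hz₂L⟩ := exists_point_interior_avoid hpos2 (collinear_pair ℝ x y₁)
  have hz₂x : z₂ ≠ x := by
    intro h
    subst h
    exact hz₂L (subset_affineSpan ℝ _ (Set.mem_insert z₂ _))
  obtain ⟨y₂, hy₂U, hy₂F, hy₂seg, hy₂x⟩ :=
    exists_aux_point isOpen_interior hxK₁ hz₂x (knotSet_finite K₁)
  set K₂ : Multiset (ℝ × ℝ) := y₂ ::ₘ K₁.erase p₂ with hK₂
  have hK₂card : Multiset.card K₂ = Multiset.card K := by
    rw [hK₂, Multiset.card_cons, Multiset.card_erase_of_mem (Multiset.mem_toFinset.mp hp₂T),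
      Nat.pred_eq_sub_one, hK₁card]
    omega
  have hsub2 : knotSet (K₁.erase p₂) ⊆ knotSet K₂ := by
    rw [hK₂, knotSet_cons]; exact subset_insert _ _
  have hy₂K₂ : y₂ ∈ knotSet K₂ := by rw [hK₂, knotSet_cons]; exact mem_insert _ _
  have hxK₂ : x ∈ interior (convexHull ℝ (knotSet K₂)) :=
    mem_interior_of_segment (interior_mono (convexHull_mono hsub2) hz₂I) hy₂K₂ hy₂seg
  have hposK₂ : 0 < volume (convexHull ℝ (knotSet K₂)) :=
    volPos_of_interior_nonempty ⟨x, hxK₂⟩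
  obtain ⟨c₂, hc₂, hb₂⟩ := insert_step (x := x) hA.le hQ (by omega) hposK₁ hy₂F hy₂U hp₂T
  -- ### geometry of y₁, y₂
  have hy₂y₁ : y₂ ≠ y₁ := fun h => hy₂F (h ▸ hy₁K₁)
  have hy₁mem : y₁ ∈ (affineSpan ℝ ({y₁, y₂} : Set (ℝ × ℝ))) :=
    subset_affineSpan ℝ _ (Set.mem_insert _ _)
  have hy₂mem : y₂ ∈ (affineSpan ℝ ({y₁, y₂} : Set (ℝ × ℝ))) :=
    subset_affineSpan ℝ _ (by simp)
  have hxN : x ∉ (affineSpan ℝ ({y₁, y₂} : Set (ℝ × ℝ)) : Set (ℝ × ℝ)) := by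
    intro hxN
    have hcol : Collinear ℝ (insert x ({y₁, y₂} : Set (ℝ × ℝ))) :=
      (collinear_insert_iff_of_mem_affineSpan hxN).mpr (collinear_pair ℝ y₁ y₂)
    have hy₂line : y₂ ∈ line[ℝ, x, y₁] :=
      hcol.mem_affineSpan_of_mem_of_ne (Set.mem_insert _ _) (by simp) (by simp)
        (Ne.symm hy₁x)
    obtain ⟨a, b, ha, hb, hab, hxe⟩ := hy₂seg
    have hz₂eq : z₂ = (b / a) • (x -ᵥ y₂) +ᵥ x := by
      have : a • z₂ = x - b • y₂ := by
        rw [← hxe]; abel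
      have hz₂' : z₂ = a⁻¹ • (x - b • y₂) := by
        rw [← this, smul_smul, inv_mul_cancel₀ ha.ne', one_smul]
      rw [hz₂']
      show a⁻¹ • (x - b • y₂) = (b / a) • (x - y₂) + x
      match_scalars <;> field_simp <;> linarith
    rw [hz₂eq] at hz₂L
    exact hz₂L ((affineSpan ℝ ({x, y₁} : Set (ℝ × ℝ))).smul_vsub_vadd_mem (b / a)
      (subset_affineSpan ℝ _ (Set.mem_insert _ _)) hy₂line
      (subset_affineSpan ℝ _ (Set.mem_insert _ _)))
  -- the midpoint
  set m : ℝ × ℝ := (2⁻¹ : ℝ) • y₁ + (2⁻¹ : ℝ) • y₂ with hm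
  have hmmem : m ∈ (affineSpan ℝ ({y₁, y₂} : Set (ℝ × ℝ))) := by
    have : m = (2⁻¹ : ℝ) • (y₁ -ᵥ y₂) +ᵥ y₂ := by
      rw [hm]
      show (2⁻¹ : ℝ) • y₁ + (2⁻¹ : ℝ) • y₂ = (2⁻¹ : ℝ) • (y₁ - y₂) + y₂
      match_scalars <;> norm_num
    rw [this]
    exact (affineSpan ℝ _).smul_vsub_vadd_mem _ hy₁mem hy₂mem hy₂mem
  have hmx : m ≠ x := fun h => hxN (h ▸ hmmem)
  -- ### step 3
  obtain ⟨y₃, hy₃U, hy₃F, hy₃seg, hy₃x⟩ :=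
    exists_aux_point isOpen_interior hxK₂ hmx (knotSet_finite K₂)
  obtain ⟨a, b, ha, hb, hab, hxe⟩ := hy₃seg
  have hy₃N : y₃ ∉ (affineSpan ℝ ({y₁, y₂} : Set (ℝ × ℝ)) : Set (ℝ × ℝ)) := by
    intro h
    apply hxN
    have : x = b • (y₃ -ᵥ m) +ᵥ m := by
      rw [← hxe]
      show a • m + b • y₃ = b • (y₃ - m) + m
      have h1 : a = 1 - b := by linarith
      rw [h1, sub_smul, one_smul, smul_sub]
      abel
    rw [this]
    exact (affineSpan ℝ _).smul_vsub_vadd_mem _ h hmmem hmmem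
  have hnc : ¬ Collinear ℝ ({y₁, y₂, y₃} : Set (ℝ × ℝ)) := by
    intro hc
    exact hy₃N (hc.mem_affineSpan_of_mem_of_ne (Set.mem_insert _ _) (by simp) (by simp)
      (Ne.symm hy₂y₁))
  -- x is in the interior of the triangle y₁ y₂ y₃
  have hvind : AffineIndependent ℝ ![y₁, y₂, y₃] :=
    affineIndependent_iff_not_collinear_set.mpr hnc
  set bas : AffineBasis (Fin 3) ℝ (ℝ × ℝ) := ⟨![y₁, y₂, y₃], hvind, span_top_of_triple hvind⟩
    with hbas
  have hbascoe : ⇑bas = ![y₁, y₂, y₃] := rfl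
  set c : Fin 3 → ℝ := ![a / 2, a / 2, b] with hc
  have hcsum : ∑ i, c i = 1 := by
    rw [hc, Fin.sum_univ_three]
    show a / 2 + a / 2 + b = 1
    linarith
  have hcomb : Finset.univ.affineCombination ℝ ⇑bas c = x := by
    rw [show ⇑bas = ![y₁, y₂, y₃] from rfl]
    rw [Finset.univ.affineCombination_eq_linear_combination _ _ hcsum, Fin.sum_univ_three]
    show (a/2) • y₁ + (a/2) • y₂ + b • y₃ = x
    rw [← hxe, hm]
    match_scalars <;> ring
  have hcoord : ∀ i, 0 < bas.coord i x := by
    intro i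
    have := bas.coord_apply_combination_of_mem (Finset.mem_univ i) hcsum (w := c)
    rw [hcomb] at this
    rw [this]
    fin_cases i <;> simp [hc] <;> linarith
  have hxtri : x ∈ interior (convexHull ℝ ({y₁, y₂, y₃} : Set (ℝ × ℝ))) := by
    have hrange : range ⇑bas = ({y₁, y₂, y₃} : Set (ℝ × ℝ)) := by
      rw [hbascoe]
      ext z
      constructor
      · rintro ⟨i, rfl⟩; fin_cases i <;> simp
      · intro hz
        simp only [Set.mem_insert_iff, Set.mem_singleton_iff] at hz
        rcases hz with rfl | rfl | rfl
        exacts [⟨0, rfl⟩, ⟨1, rfl⟩, ⟨2, rfl⟩]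
    rw [← hrange, bas.interior_convexHull]
    exact hcoord
  -- choose p₃
  have hp₂K : p₂ ∈ K.erase p₁ := by
    have : p₂ ∈ K₁ := Multiset.mem_toFinset.mp hp₂T
    rw [hK₁, Multiset.mem_cons] at this
    rcases this with h | h
    · exact absurd h hp₂y₁
    · exact h
  set R : Multiset (ℝ × ℝ) := (K.erase p₁).erase p₂ with hR
  have hK₁e : K₁.erase p₂ = y₁ ::ₘ R := by
    rw [hK₁, hR]
    exact Multiset.erase_cons_tail _ (Ne.symm hp₂y₁)
  have hRcard : 0 < Multiset.card R := by
    rw [hR, Multiset.card_erase_of_mem hp₂K,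
      Multiset.card_erase_of_mem (Multiset.mem_toFinset.mp hp₁T)]
    rw [Nat.pred_eq_sub_one, Nat.pred_eq_sub_one]
    omega
  obtain ⟨p₃, hp₃R⟩ := Multiset.exists_mem_of_ne_zero (s := R) (by
    intro h
    rw [h] at hRcard
    simp at hRcard)
  have hp₃K : p₃ ∈ K :=
    Multiset.mem_of_le ((Multiset.erase_le _ _).trans (Multiset.erase_le _ _)) hp₃R
  have hp₃y₁ : p₃ ≠ y₁ := fun h => hy₁F (h ▸ knotSet_mem.mpr hp₃K)
  have hp₃K₁ : p₃ ∈ K₁ := by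
    rw [hK₁]
    exact Multiset.mem_cons_of_mem (Multiset.mem_of_le (Multiset.erase_le _ _) hp₃R)
  have hp₃y₂ : p₃ ≠ y₂ := fun h => hy₂F (h ▸ knotSet_mem.mpr hp₃K₁)
  have hK₂R : K₂ = y₂ ::ₘ y₁ ::ₘ R := by rw [hK₂, hK₁e]
  have hp₃T₂ : p₃ ∈ K₂.toFinset := by
    rw [Multiset.mem_toFinset, hK₂R]
    exact Multiset.mem_cons_of_mem (Multiset.mem_cons_of_mem hp₃R)
  obtain ⟨c₃, hc₃, hb₃⟩ := insert_step (x := x) hA.le hQ (by omega) hposK₂ hy₃F hy₃U hp₃T₂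
  set K₃ : Multiset (ℝ × ℝ) := y₃ ::ₘ K₂.erase p₃ with hK₃
  have hK₂e : K₂.erase p₃ = y₂ ::ₘ y₁ ::ₘ R.erase p₃ := by
    rw [hK₂R, Multiset.erase_cons_tail _ (Ne.symm hp₃y₂),
      Multiset.erase_cons_tail _ (Ne.symm hp₃y₁)]
  have hYle : ({y₁, y₂, y₃} : Multiset (ℝ × ℝ)) ≤ K₃ := by
    have hperm : ({y₁, y₂, y₃} : Multiset (ℝ × ℝ)) = y₃ ::ₘ y₂ ::ₘ y₁ ::ₘ 0 := by
      show y₁ ::ₘ y₂ ::ₘ y₃ ::ₘ 0 = y₃ ::ₘ y₂ ::ₘ y₁ ::ₘ 0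
      rw [Multiset.cons_swap y₂ y₃, Multiset.cons_swap y₁ y₃, Multiset.cons_swap y₁ y₂]
    rw [hperm, hK₃, hK₂e]
    exact Multiset.cons_le_cons _ (Multiset.cons_le_cons _ (Multiset.cons_le_cons _
      (Multiset.zero_le _)))
  have hK₃pos : 0 < Q K₃ x :=
    descend hA hQ y₁ y₂ y₃ x hxtri (Multiset.card K₃) K₃ rfl hYle
  have h2 : 0 < Q K₂ x := lt_of_lt_of_le (mul_pos hc₃ hK₃pos) hb₃
  have h1 : 0 < Q K₁ x := lt_of_lt_of_le (mul_pos hc₂ h2) hb₂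
  exact lt_of_lt_of_le (mul_pos hc₁ h1) hb₁

/-- **Nonnegativity and positivity of the area-normalized simplex spline.**
Let `Δ` be a nondegenerate triangle (with vertices `v 0, v 1, v 2`) and let `Q` be the family
of area-normalized simplex splines for `Δ`.  Let `K` be a multiset of at least 3 points of
`ℝ²` whose convex hull has positive area.  Then `Q K` is nonnegative everywhere on `ℝ²` and
strictly positive on the interior of the convex hull of `K`. -/
theorem qspline_nonneg_pos (v : Fin 3 → ℝ × ℝ) (hv : AffineIndependent ℝ v)
    (Q : Multiset (ℝ × ℝ) → (ℝ × ℝ) → ℝ)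
    (hQ : IsQFamily ((volume (convexHull ℝ (Set.range v))).toReal) Q)
    (K : Multiset (ℝ × ℝ)) (hK : 3 ≤ Multiset.card K)
    (harea : 0 < volume (convexHull ℝ (knotSet K))) :
    (∀ x : ℝ × ℝ, 0 ≤ Q K x) ∧
      ∀ x ∈ interior (convexHull ℝ (knotSet K)), 0 < Q K x := by
  have hfin : (Set.range v).Finite := Set.finite_range v
  have hApos : 0 < (volume (convexHull ℝ (Set.range v))).toReal := by
    apply ENNReal.toReal_pos
    · exact (volPos_of_interior_nonempty
        (interior_convexHull_nonempty_iff_affineSpan_eq_top.mpr (span_top_of_triple hv))).ne'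
    · exact (hfin.isCompact_convexHull (𝕜 := ℝ)).measure_lt_top.ne
  constructor
  · exact fun x => (qspline_nonneg_support hApos.le hQ _ K rfl hK).1 x
  · exact fun x hx => qspline_pos hApos hQ K hK x hx
end
end
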